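/- The ladder chain L(2,2,√2−1) is recurrent: if p = √2−1, then P(S_n = 0 for some n ≥ 1) = 1. -/

import Mathlib

open MeasureTheory ProbabilityTheory Filter
open scoped ENNReal Classical

noncomputable section

variable {Ω : Type*} [MeasurableSpace Ω]

/-- The `k`-th step of the ladder chain `L(2,2,p)` built from the driving
sequence `ξ` (indexed from 1): `X₁ = ±1` according to `ξ₁`, and for `k ≥ 2`,
`X_k = -1` if `ξ_k = -1`, `X_k = 2` if `ξ_k = ξ_{k-1} = 1`, and `X_k = 1`
if `ξ_k = 1, ξ_{k-1} = -1`. -/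
def ladderX (ξ : ℕ → Ω → ℤ) (k : ℕ) (ω : Ω) : ℤ :=
  if k = 1 then (if ξ 1 ω = 1 then 1 else -1)
  else if ξ k ω = -1 then -1
  else if ξ (k - 1) ω = 1 then 2 else 1

/-- The ladder chain `S_n = X₁ + ⋯ + X_n` (with `S_0 = 0`). -/
def ladderS (ξ : ℕ → Ω → ℤ) (n : ℕ) (ω : Ω) : ℤ :=
  ∑ k ∈ Finset.Icc 1 n, ladderX ξ k ω

/-- The values of any step of the ladder chain lie in `{-1, 1, 2}`. -/
lemma ladderX_mem (ξ : ℕ → Ω → ℤ) (k : ℕ) (ω : Ω) :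
    ladderX ξ k ω = -1 ∨ ladderX ξ k ω = 1 ∨ ladderX ξ k ω = 2 := by
  unfold ladderX; split_ifs <;> simp

lemma ladderS_succ (ξ : ℕ → Ω → ℤ) (n : ℕ) (ω : Ω) :
    ladderS ξ (n + 1) ω = ladderS ξ n ω + ladderX ξ (n + 1) ω := by
  unfold ladderS
  rw [Finset.sum_Icc_succ_top (Nat.one_le_iff_ne_zero.2 (Nat.succ_ne_zero n))]

/-- Deterministic path lemma: a path started at `0`, whose down-steps are exactly `-1`,
and which is unbounded above and below, must hit `0` at a positive time. -/
lemma ladder_hit_zero (s : ℕ → ℤ) (h0 : s 0 = 0)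
    (hstep : ∀ k, s (k + 1) ≤ s k → s (k + 1) = s k - 1)
    (hup : ∀ C : ℤ, ∃ n, C < s n) (hdown : ∀ C : ℤ, ∃ n, s n < C) :
    ∃ n, 1 ≤ n ∧ s n = 0 := by
  obtain ⟨n, hn⟩ := hup 0
  obtain ⟨m, hm⟩ := hdown ((Finset.range (n + 1)).inf' (by simp) s)
  have hmn : n < m := by
    by_contra h
    push_neg at h
    exact absurd (Finset.inf'_le s (Finset.mem_range.2 (Nat.lt_succ_of_le h))) (not_le.2 hm)
  have hm0 : s m ≤ 0 := by
    have h00 : (Finset.range (n + 1)).inf' (by simp) s ≤ s 0 :=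
      Finset.inf'_le s (Finset.mem_range.2 (Nat.succ_pos n))
    omega
  have hex : ∃ i, n < i ∧ s i ≤ 0 := ⟨m, hmn, hm0⟩
  set k := Nat.find hex with hk
  obtain ⟨hk1, hk2⟩ : n < k ∧ s k ≤ 0 := Nat.find_spec hex
  have hprev : 1 ≤ s (k - 1) := by
    rcases eq_or_lt_of_le (Nat.succ_le_of_lt hk1) with he | hl
    · have hkn : k - 1 = n := by omega
      rw [hkn]; omega
    · have h2 : k - 1 < k := by omega
      have h3 := Nat.find_min hex h2
      push_neg at h3
      have := h3 (by omega)
      omega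
  have hks : k - 1 + 1 = k := by omega
  have hle : s (k - 1 + 1) ≤ s (k - 1) := by rw [hks]; omega
  have := hstep (k - 1) hle
  rw [hks] at this
  exact ⟨k, by omega, by omega⟩

/-- The ladder chain `L(2,2,√2-1)` is recurrent:
`P(S_n = 0 for some n ≥ 1) = 1`. -/
theorem ladder_critical_recurrent (p : ℝ) (hp : p = Real.sqrt 2 - 1)
    (P : Measure Ω) [IsProbabilityMeasure P]
    (ξ : ℕ → Ω → ℤ) (hmeas : ∀ n, Measurable (ξ n))
    (hindep : iIndepFun ξ P)
    (hval : ∀ n ω, ξ n ω = 1 ∨ ξ n ω = -1)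
    (hprob : ∀ n, 1 ≤ n → P {ω | ξ n ω = 1} = ENNReal.ofReal p) :
    P {ω | ∃ n, 1 ≤ n ∧ ladderS ξ n ω = 0} = 1 := by
  classical
  -- Basic facts about `p`.
  have hsq : Real.sqrt 2 ^ 2 = 2 := Real.sq_sqrt (by norm_num)
  have hsqnn : (0:ℝ) ≤ Real.sqrt 2 := Real.sqrt_nonneg 2
  have hp0 : 0 < p := by nlinarith
  have hp1 : p < 1 := by nlinarith
  have hpp : p ^ 2 + 2 * p - 1 = 0 := by rw [hp]; ring_nf; nlinarith
  -- The natural filtration of `ξ`.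
  have hsm : ∀ n, StronglyMeasurable (ξ n) := fun n => (hmeas n).stronglyMeasurable
  set ℱ : Filtration ℕ (inferInstance : MeasurableSpace Ω) := Filtration.natural ξ hsm with hℱ
  have hcomap_le : ∀ {k n : ℕ}, k ≤ n →
      MeasurableSpace.comap (ξ k) inferInstance ≤ ℱ n := by
    intro k n hkn
    rw [hℱ]
    exact le_biSup (fun j => MeasurableSpace.comap (ξ j) inferInstance) hkn
  have hsetm : ∀ {k n : ℕ}, k ≤ n → ∀ c : ℤ, MeasurableSet[ℱ n] {ω | ξ k ω = c} := by
    intro k n hkn c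
    apply hcomap_le hkn
    exact ⟨{c}, trivial, by ext ω; simp⟩
  -- Measurability of the chain with respect to the filtration.
  have hXm : ∀ {k n : ℕ}, 1 ≤ k → k ≤ n → Measurable[ℱ n] (ladderX ξ k) := by
    intro k n hk hkn
    unfold ladderX
    rcases eq_or_ne k 1 with hk1 | hk1
    · subst hk1
      simp only [if_pos rfl]
      exact Measurable.ite (p := fun ω => ξ 1 ω = 1) (hsetm hkn 1) measurable_const
        measurable_const
    · simp only [if_neg hk1]
      exact Measurable.ite (p := fun ω => ξ k ω = -1) (hsetm hkn (-1)) measurable_const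
        (Measurable.ite (p := fun ω => ξ (k - 1) ω = 1)
          (hsetm (le_trans (Nat.sub_le k 1) hkn) 1) measurable_const measurable_const)
  have hSm : ∀ {n m : ℕ}, n ≤ m → Measurable[ℱ m] (ladderS ξ n) := by
    intro n m hnm
    unfold ladderS
    apply Finset.measurable_sum
    intro k hkmem
    rw [Finset.mem_Icc] at hkmem
    exact hXm hkmem.1 (le_trans hkmem.2 hnm)
  -- The correction term and the compensated martingale.
  set F : ℕ → Ω → ℝ := fun n ω => if n ≠ 0 ∧ ξ n ω = 1 then 3 * p - 1 else 2 * p - 1 with hFdef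
  set M : ℕ → Ω → ℝ := fun n ω => (ladderS ξ n ω : ℝ) + F n ω with hMdef
  have hFm : ∀ n, Measurable[ℱ n] (F n) := by
    intro n
    rcases eq_or_ne n 0 with hn | hn
    · subst hn
      have : F 0 = fun _ => 2 * p - 1 := by
        funext ω; simp [hFdef]
      rw [this]; exact measurable_const
    · have : F n = fun ω => if ξ n ω = 1 then 3 * p - 1 else 2 * p - 1 := by
        funext ω; simp [hFdef, hn]
      rw [this]
      exact Measurable.ite (hsetm le_rfl 1) measurable_const measurable_const
  have hMm : ∀ n, Measurable[ℱ n] (M n) := by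
    intro n
    apply Measurable.add
    · exact measurable_from_top.comp (hSm le_rfl)
    · exact hFm n
  have hadp : StronglyAdapted ℱ M := fun n => (hMm n).stronglyMeasurable
  -- Bounds.
  have hX2 : ∀ k ω, |ladderX ξ k ω| ≤ 2 := by
    intro k ω
    rcases ladderX_mem ξ k ω with h | h | h <;> rw [h] <;> norm_num
  have hSb : ∀ n ω, |(ladderS ξ n ω : ℝ)| ≤ 2 * n := by
    intro n ω
    have h1 : |ladderS ξ n ω| ≤ 2 * n := by
      unfold ladderS
      calc |∑ k ∈ Finset.Icc 1 n, ladderX ξ k ω| ≤ ∑ k ∈ Finset.Icc 1 n, |ladderX ξ k ω| :=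
            Finset.abs_sum_le_sum_abs _ _
        _ ≤ ∑ _k ∈ Finset.Icc 1 n, 2 := Finset.sum_le_sum fun k _ => hX2 k ω
        _ = 2 * n := by simp [Nat.Icc_eq_range', mul_comm]
    calc |(ladderS ξ n ω : ℝ)| = ((|ladderS ξ n ω| : ℤ) : ℝ) := by push_cast; ring
      _ ≤ ((2 * n : ℤ) : ℝ) := by exact_mod_cast h1
      _ = 2 * n := by push_cast; ring
  have hFb : ∀ n ω, |F n ω| ≤ 2 := by
    intro n ω
    simp only [hFdef]
    split_ifs <;> rw [abs_le] <;> constructor <;> nlinarith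
  have hMb : ∀ n ω, |M n ω| ≤ 2 * n + 2 := by
    intro n ω
    have := hSb n ω
    have := hFb n ω
    simp only [hMdef]
    calc |(ladderS ξ n ω : ℝ) + F n ω| ≤ |(ladderS ξ n ω : ℝ)| + |F n ω| := abs_add_le _ _
      _ ≤ 2 * n + 2 := by linarith
  have hint : ∀ n, Integrable (M n) P := by
    intro n
    refine ⟨((hMm n).mono (ℱ.le n) le_rfl).aestronglyMeasurable, ?_⟩
    exact HasFiniteIntegral.of_bounded (C := 2 * n + 2) (ae_of_all _ fun ω => by
      simpa [Real.norm_eq_abs] using hMb n ω)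
  -- The indicator of `ξ_{n+1} = 1` and its conditional expectation.
  set s : ℕ → Set Ω := fun k => {ω | ξ k ω = 1} with hsdef
  set I : ℕ → Ω → ℝ := fun k => (s k).indicator (fun _ => (1 : ℝ)) with hIdef
  have hsmeas : ∀ k, MeasurableSet (s k) := fun k =>
    hmeas k (show MeasurableSet ({1} : Set ℤ) from trivial)
  have hIint : ∀ k, Integrable (I k) P := by
    intro k
    refine ⟨(stronglyMeasurable_const.indicator (hsmeas k)).aestronglyMeasurable, ?_⟩
    exact HasFiniteIntegral.of_bounded (C := 1) (ae_of_all _ fun ω => by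
      simp only [hIdef, Real.norm_eq_abs, Set.indicator_apply]
      split_ifs <;> norm_num)
  have hIcond : ∀ n, (P[I (n + 1)|ℱ n]) =ᵐ[P] fun _ => p := by
    intro n
    have hindep' : Indep (MeasurableSpace.comap (ξ (n + 1)) inferInstance) (ℱ n) P := by
      rw [hℱ]
      exact hindep.indep_comap_natural_of_lt hsm (Nat.lt_succ_self n)
    have hsm1 : StronglyMeasurable[MeasurableSpace.comap (ξ (n + 1)) inferInstance] (I (n + 1)) :=
      stronglyMeasurable_const.indicator ⟨{1}, trivial, by ext ω; simp [hsdef]⟩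
    have h := condExp_indep_eq (μ := P) ((hmeas (n + 1)).comap_le) (ℱ.le n) hsm1 hindep'
    refine h.trans ?_
    have h2 : ∫ ω, I (n + 1) ω ∂P = (P (s (n + 1))).toReal := integral_indicator_one (hsmeas (n + 1))
    have h3 : P (s (n + 1)) = ENNReal.ofReal p := hprob (n + 1) (by omega)
    refine Filter.EventuallyEq.of_eq ?_
    funext ω
    rw [h2, h3, ENNReal.toReal_ofReal hp0.le]
  -- The increment decomposition.
  set A : ℕ → Ω → ℝ := fun n ω => if n ≠ 0 ∧ ξ n ω = 1 then -1 - p else -1 with hAdef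
  set B : ℕ → Ω → ℝ := fun n ω => if n ≠ 0 ∧ ξ n ω = 1 then 3 + p else 2 + p with hBdef
  have hAm : ∀ n, Measurable[ℱ n] (A n) := by
    intro n
    rcases eq_or_ne n 0 with hn | hn
    · subst hn
      have : A 0 = fun _ => -1 := by funext ω; simp [hAdef]
      rw [this]; exact measurable_const
    · have : A n = fun ω => if ξ n ω = 1 then -1 - p else -1 := by
        funext ω; simp [hAdef, hn]
      rw [this]
      exact Measurable.ite (hsetm le_rfl 1) measurable_const measurable_const
  have hBm : ∀ n, Measurable[ℱ n] (B n) := by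
    intro n
    rcases eq_or_ne n 0 with hn | hn
    · subst hn
      have : B 0 = fun _ => 2 + p := by funext ω; simp [hBdef]
      rw [this]; exact measurable_const
    · have : B n = fun ω => if ξ n ω = 1 then 3 + p else 2 + p := by
        funext ω; simp [hBdef, hn]
      rw [this]
      exact Measurable.ite (hsetm le_rfl 1) measurable_const measurable_const
  have hiv : ∀ k ω, I k ω = if ξ k ω = 1 then 1 else 0 := by
    intro k ω
    simp [hIdef, Set.indicator_apply, hsdef]
  have hdecomp : ∀ n ω, M (n + 1) ω = M n ω + (A n ω + B n ω * I (n + 1) ω) := by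
    intro n ω
    have hS := ladderS_succ ξ n ω
    rcases Nat.eq_zero_or_pos n with hn | hn
    · subst hn
      have h00 : ladderS ξ 0 ω = 0 := by simp [ladderS]
      rcases hval 1 ω with h1 | h1 <;>
        simp [hMdef, hFdef, hAdef, hBdef, hiv, hS, h00, ladderX, h1] <;> ring
    · have hne : n ≠ 0 := hn.ne'
      have hne1 : n + 1 ≠ 1 := by omega
      have hsub : n + 1 - 1 = n := rfl
      rcases hval (n + 1) ω with h1 | h1 <;> rcases hval n ω with h2 | h2 <;>
        simp [hMdef, hFdef, hAdef, hBdef, hiv, hS, ladderX, hne, hne1, hsub, h1, h2] <;>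
        push_cast <;> ring
  -- The martingale property.
  have hAb : ∀ n ω, |A n ω| ≤ 2 := by
    intro n ω
    simp only [hAdef]
    split_ifs <;> rw [abs_le] <;> constructor <;> nlinarith
  have hBb : ∀ n ω, |B n ω| ≤ 4 := by
    intro n ω
    simp only [hBdef]
    split_ifs <;> rw [abs_le] <;> constructor <;> nlinarith
  have hAint : ∀ n, Integrable (A n) P := by
    intro n
    refine ⟨((hAm n).mono (ℱ.le n) le_rfl).aestronglyMeasurable, ?_⟩
    exact HasFiniteIntegral.of_bounded (C := 2) (ae_of_all _ fun ω => by
      simpa [Real.norm_eq_abs] using hAb n ω)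
  have hBIint : ∀ n, Integrable (fun ω => B n ω * I (n + 1) ω) P := by
    intro n
    refine ⟨(((hBm n).mono (ℱ.le n) le_rfl).mul
      ((stronglyMeasurable_const.indicator (hsmeas (n+1))).measurable)).aestronglyMeasurable, ?_⟩
    refine HasFiniteIntegral.of_bounded (C := 4) (ae_of_all _ fun ω => ?_)
    have h1 := hBb n ω
    have h2 : |I (n + 1) ω| ≤ 1 := by
      rw [hiv]; split_ifs <;> norm_num
    rw [Real.norm_eq_abs, abs_mul]
    nlinarith [abs_nonneg (B n ω), abs_nonneg (I (n + 1) ω)]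
  have hcond : ∀ n, M n =ᵐ[P] P[M (n + 1)|ℱ n] := by
    intro n
    have hM1 : M (n + 1) = fun ω => (M n ω + A n ω) + B n ω * I (n + 1) ω := by
      funext ω
      rw [hdecomp n ω]; ring
    have hMAint : Integrable (fun ω => M n ω + A n ω) P := (hint n).add (hAint n)
    have e1 : P[M (n + 1)|ℱ n] =ᵐ[P]
        P[fun ω => M n ω + A n ω|ℱ n] + P[fun ω => B n ω * I (n + 1) ω|ℱ n] := by
      rw [hM1]
      exact condExp_add hMAint (hBIint n) _
    have e2 : P[fun ω => M n ω + A n ω|ℱ n] = fun ω => M n ω + A n ω :=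
      condExp_of_stronglyMeasurable (ℱ.le n)
        (((hMm n).add (hAm n)).stronglyMeasurable) hMAint
    have e3 : P[fun ω => B n ω * I (n + 1) ω|ℱ n] =ᵐ[P] fun ω => B n ω * (P[I (n + 1)|ℱ n]) ω := by
      have := condExp_mul_of_stronglyMeasurable_left (μ := P) (m := ℱ n)
        ((hBm n).stronglyMeasurable) (hBIint n) (hIint (n + 1))
      exact this
    have e4 : (fun ω => B n ω * (P[I (n + 1)|ℱ n]) ω) =ᵐ[P] fun ω => B n ω * p := by
      filter_upwards [hIcond n] with ω hω
      rw [hω]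
    have hzero : ∀ ω, A n ω + B n ω * p = 0 := by
      intro ω
      simp only [hAdef, hBdef]
      split_ifs <;> linear_combination hpp
    calc M n =ᵐ[P] fun ω => (M n ω + A n ω) + B n ω * p := by
          refine Filter.EventuallyEq.of_eq ?_
          funext ω
          have hz := hzero ω
          linarith
      _ =ᵐ[P] P[fun ω => M n ω + A n ω|ℱ n] + P[fun ω => B n ω * I (n + 1) ω|ℱ n] := by
          filter_upwards [e3, e4] with ω h3 h4
          simp only [Pi.add_apply]
          rw [e2, h3, h4]
      _ =ᵐ[P] P[M (n + 1)|ℱ n] := e1.symm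
  have hmart : Martingale M ℱ P := martingale_nat hadp hint hcond
  -- Increment bounds.
  have hbdd : ∀ᵐ ω ∂P, ∀ i, |M (i + 1) ω - M i ω| ≤ ((6 : NNReal) : ℝ) := by
    refine ae_of_all _ fun ω i => ?_
    rw [hdecomp i ω]
    have h1 := hAb i ω
    have h2 := hBb i ω
    have h3 : |I (i + 1) ω| ≤ 1 := by rw [hiv]; split_ifs <;> norm_num
    have : |M i ω + (A i ω + B i ω * I (i + 1) ω) - M i ω| = |A i ω + B i ω * I (i + 1) ω| := by
      congr 1; ring
    rw [this]
    calc |A i ω + B i ω * I (i + 1) ω| ≤ |A i ω| + |B i ω * I (i + 1) ω| := abs_add_le _ _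
      _ = |A i ω| + |B i ω| * |I (i + 1) ω| := by rw [abs_mul]
      _ ≤ ((6 : NNReal) : ℝ) := by
          push_cast
          nlinarith [abs_nonneg (B i ω), abs_nonneg (I (i + 1) ω),
            mul_le_mul h2 h3 (abs_nonneg _) (by norm_num : (0:ℝ) ≤ 4)]
  have hge1 : ∀ i ω, 1 ≤ |M (i + 1) ω - M i ω| := by
    intro i ω
    have hd : M (i + 1) ω - M i ω = A i ω + B i ω * I (i + 1) ω := by
      rw [hdecomp i ω]; ring
    rw [hd, hiv (i + 1) ω]
    simp only [hAdef, hBdef]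
    rw [le_abs]
    split_ifs
    · left; nlinarith
    · right; nlinarith
    · left; nlinarith
    · right; nlinarith
  -- a.e. unboundedness of M above and below.
  have h1 := hmart.submartingale.bddAbove_iff_exists_tendsto hbdd
  have h2 := hmart.bddAbove_range_iff_bddBelow_range hbdd
  have hae : ∀ᵐ ω ∂P, ∃ n, 1 ≤ n ∧ ladderS ξ n ω = 0 := by
    filter_upwards [h1, h2] with ω hω1 hω2
    have hnotconv : ¬∃ c, Tendsto (fun n => M n ω) atTop (nhds c) := by
      rintro ⟨c, hc⟩
      have h3 : Tendsto (fun n => M (n + 1) ω - M n ω) atTop (nhds 0) := by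
        have := (hc.comp (tendsto_add_atTop_nat 1)).sub hc
        simpa using this
      obtain ⟨N, hN⟩ := Metric.tendsto_atTop.mp h3 1 one_pos
      have := hN N le_rfl
      rw [Real.dist_eq, sub_zero] at this
      exact absurd this (not_lt.2 (hge1 N ω))
    have hnb : ¬BddAbove (Set.range fun n => M n ω) := fun hb => hnotconv (hω1.mp hb)
    have hnbb : ¬BddBelow (Set.range fun n => M n ω) := fun hb => hnb (hω2.mpr hb)
    have hup : ∀ C : ℤ, ∃ n, C < ladderS ξ n ω := by
      intro C
      obtain ⟨y, ⟨n, rfl⟩, hy⟩ := not_bddAbove_iff.mp hnb ((C : ℝ) + 2)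
      refine ⟨n, ?_⟩
      have hF2 := hFb n ω
      have : (C : ℝ) < (ladderS ξ n ω : ℝ) := by
        have : M n ω = (ladderS ξ n ω : ℝ) + F n ω := rfl
        rw [abs_le] at hF2
        linarith [hy]
      exact_mod_cast this
    have hdown : ∀ C : ℤ, ∃ n, ladderS ξ n ω < C := by
      intro C
      obtain ⟨y, ⟨n, rfl⟩, hy⟩ := not_bddBelow_iff.mp hnbb ((C : ℝ) - 2)
      refine ⟨n, ?_⟩
      have hF2 := hFb n ω
      have : (ladderS ξ n ω : ℝ) < (C : ℝ) := by
        have : M n ω = (ladderS ξ n ω : ℝ) + F n ω := rfl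
        rw [abs_le] at hF2
        linarith [hy]
      exact_mod_cast this
    refine ladder_hit_zero (fun n => ladderS ξ n ω) (by simp [ladderS]) ?_ hup hdown
    intro k hk
    have hk' : ladderS ξ (k + 1) ω ≤ ladderS ξ k ω := hk
    show ladderS ξ (k + 1) ω = ladderS ξ k ω - 1
    have hS := ladderS_succ ξ k ω
    rcases ladderX_mem ξ (k + 1) ω with h | h | h <;> omega
  -- Conclusion.
  refine le_antisymm prob_le_one ?_
  have hsub : (Set.univ : Set Ω) ⊆ {ω | ∃ n, 1 ≤ n ∧ ladderS ξ n ω = 0} ∪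
      {ω | ¬∃ n, 1 ≤ n ∧ ladderS ξ n ω = 0} := by
    intro ω _
    by_cases h : ∃ n, 1 ≤ n ∧ ladderS ξ n ω = 0
    · exact Or.inl h
    · exact Or.inr h
  have hnull : P {ω | ¬∃ n, 1 ≤ n ∧ ladderS ξ n ω = 0} = 0 := ae_iff.mp hae
  calc (1 : ℝ≥0∞) = P Set.univ := (measure_univ).symm
    _ ≤ P ({ω | ∃ n, 1 ≤ n ∧ ladderS ξ n ω = 0} ∪ {ω | ¬∃ n, 1 ≤ n ∧ ladderS ξ n ω = 0}) :=
        measure_mono hsub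
    _ ≤ P {ω | ∃ n, 1 ≤ n ∧ ladderS ξ n ω = 0} + P {ω | ¬∃ n, 1 ≤ n ∧ ladderS ξ n ω = 0} :=
        measure_union_le _ _
    _ = P {ω | ∃ n, 1 ≤ n ∧ ladderS ξ n ω = 0} := by rw [hnull, add_zero]

end
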